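/- Let σ > 0, and let n, K, d be positive integers. For each t ∈ {1, …, n}, let m_t ≤ K be a nonnegative integer and x_{t,1}, …, x_{t,m_t} ∈ ℝ^d be vectors with ‖x_{t,k}‖_2 ≤ 1. Define the Gram matrices M_0 = I_d and M_t = M_{t−1} + σ^{−2} Σ_{k=1}^{m_t} x_{t,k} x_{t,k}^T for t ≥ 1. Then Σ_{t=1}^n Σ_{k=1}^{m_t} √(x_{t,k}^T M_{t−1}^{−1} x_{t,k}) ≤ K · √( d n log(1 + nK/(d σ²)) / log(1 + 1/σ²) ). -/

import Mathlib

open Matrix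

namespace AuxStmt15
variable {d : ℕ}

lemma psd_smul {A : Matrix (Fin d) (Fin d) ℝ} (hA : A.PosSemidef) {c : ℝ} (hc : 0 ≤ c) :
    (c • A).PosSemidef := by
  refine PosSemidef.of_dotProduct_mulVec_nonneg ?_ fun v => ?_
  · have h1 : Aᵀ = A := (by simpa using hA.1 : A.IsSymm)
    simp [Matrix.IsHermitian, conjTranspose_smul, h1]
  · rw [smul_mulVec, dotProduct_smul, smul_eq_mul]
    exact mul_nonneg hc (hA.dotProduct_mulVec_nonneg v)

lemma psd_vecMulVec (v : Fin d → ℝ) : (vecMulVec v v).PosSemidef := by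
  have h := posSemidef_conjTranspose_mul_self (replicateRow Unit v)
  rw [vecMulVec_eq (ι := Unit)]
  simpa using h

lemma psd_sum (s : Finset ℕ) (v : ℕ → Fin d → ℝ) :
    (∑ k ∈ s, vecMulVec (v k) (v k)).PosSemidef :=
  Finset.sum_induction _ _ (fun _ _ ha hb => ha.add hb) Matrix.PosSemidef.zero
    (fun k _ => psd_vecMulVec (v k))

lemma one_le_det_one_add {Q : Matrix (Fin d) (Fin d) ℝ} (hQ : Q.PosSemidef) :
    1 ≤ (1 + Q).det := by
  have hH : (1 + Q).IsHermitian := Matrix.isHermitian_one.add hQ.1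
  rw [hH.det_eq_prod_eigenvalues]
  have key : ∀ i, 1 ≤ hH.eigenvalues i := by
    intro i
    rw [hH.eigenvalues_eq i]
    set v : Fin d → ℝ := (hH.eigenvectorBasis i).ofLp with hv
    have hnorm : ‖hH.eigenvectorBasis i‖ = 1 := hH.eigenvectorBasis.orthonormal.1 i
    have hvv : v ⬝ᵥ v = 1 := by
      have := congrArg (· ^ 2) hnorm
      rw [EuclideanSpace.norm_eq] at this
      simp only [Real.sq_sqrt (by positivity : (0:ℝ) ≤ ∑ j, ‖hH.eigenvectorBasis i j‖^2),
        one_pow] at this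
      simpa [dotProduct, pow_two] using this
    have hQv : 0 ≤ v ⬝ᵥ (Q *ᵥ v) := by simpa using hQ.dotProduct_mulVec_nonneg v
    have : star v ⬝ᵥ ((1 + Q) *ᵥ v) = v ⬝ᵥ v + v ⬝ᵥ (Q *ᵥ v) := by
      simp [Matrix.add_mulVec, Matrix.one_mulVec, dotProduct_add]
    rw [this, hvv]
    simpa using hQv
  calc (1:ℝ) = ∏ _i : Fin d, 1 := by simp
  _ ≤ ∏ i, hH.eigenvalues i := Finset.prod_le_prod (by simp) (by simpa using key)

open scoped MatrixOrder in
lemma det_mono {B P : Matrix (Fin d) (Fin d) ℝ} (hB : B.PosDef) (hP : P.PosSemidef) :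
    B.det ≤ (B + P).det := by
  set S := CFC.sqrt B with hS
  have hSpsd : S.PosSemidef := (CFC.sqrt_nonneg B).posSemidef
  have hSS : S * S = B := CFC.sqrt_mul_sqrt_self B hB.posSemidef.nonneg
  have hdetS : S.det * S.det = B.det := by rw [← det_mul, hSS]
  have hdB : 0 < B.det := hB.det_pos
  have hdS : IsUnit S.det := by
    refine isUnit_iff_ne_zero.2 fun h => ?_
    rw [h, mul_zero] at hdetS; exact absurd hdetS.symm (ne_of_gt hdB)
  have hSinv : S * S⁻¹ = 1 := mul_nonsing_inv S hdS
  have hSinv' : S⁻¹ * S = 1 := nonsing_inv_mul S hdS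
  have hQpsd : (S⁻¹ * P * S⁻¹).PosSemidef := by
    have := hP.conjTranspose_mul_mul_same (B := S⁻¹)
    have hherm : (S⁻¹)ᴴ = S⁻¹ := hSpsd.1.inv
    rwa [hherm] at this
  have hdecomp : B + P = S * (1 + S⁻¹ * P * S⁻¹) * S := by
    rw [Matrix.mul_add, Matrix.add_mul, Matrix.mul_one, hSS]
    congr 1
    calc P = (S * S⁻¹) * P * (S⁻¹ * S) := by
          rw [hSinv, hSinv', Matrix.one_mul, Matrix.mul_one]
    _ = S * (S⁻¹ * P * S⁻¹) * S := by simp only [Matrix.mul_assoc]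
  rw [hdecomp, det_mul, det_mul]
  have h1 := one_le_det_one_add hQpsd
  nlinarith [hdB, h1, hdetS]

lemma trace_eq_sum_eigenvalues {A : Matrix (Fin d) (Fin d) ℝ} (hA : A.IsHermitian) :
    A.trace = ∑ i, hA.eigenvalues i := by
  rw [hA.trace_eq_sum_eigenvalues]
  simp

lemma det_le_pow_trace {A : Matrix (Fin d) (Fin d) ℝ} (hA : A.PosSemidef) (hd : 0 < d) :
    A.det ≤ (A.trace / d) ^ d := by
  have hEig : ∀ i, 0 ≤ hA.1.eigenvalues i := hA.eigenvalues_nonneg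
  have hdR : (0:ℝ) < d := Nat.cast_pos.2 hd
  have hAM := Real.geom_mean_le_arith_mean_weighted Finset.univ
      (fun _ : Fin d => 1 / d) (hA.1.eigenvalues)
      (fun i _ => by positivity) (by simp [Finset.card_univ]; field_simp)
      (fun i _ => hEig i)
  have htr : A.trace = ∑ i, hA.1.eigenvalues i := trace_eq_sum_eigenvalues hA.1
  rw [hA.1.det_eq_prod_eigenvalues]
  have key : ∏ i, hA.1.eigenvalues i ≤ (∑ i, (1/d : ℝ) * hA.1.eigenvalues i) ^ d := by
    have hprod : ∏ i, hA.1.eigenvalues i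
        = (∏ i, hA.1.eigenvalues i ^ (1/d : ℝ)) ^ d := by
      rw [← Finset.prod_pow]
      refine Finset.prod_congr rfl fun i _ => ?_
      rw [← Real.rpow_natCast (hA.1.eigenvalues i ^ (1/d:ℝ)) d, ← Real.rpow_mul (hEig i)]
      rw [one_div, inv_mul_cancel₀ (ne_of_gt hdR), Real.rpow_one]
    rw [hprod]
    exact pow_le_pow_left₀ (Finset.prod_nonneg fun i _ => Real.rpow_nonneg (hEig i) _) hAM d
  calc ∏ i, hA.1.eigenvalues i ≤ (∑ i, (1/d : ℝ) * hA.1.eigenvalues i) ^ d := key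
  _ = (A.trace / d) ^ d := by rw [htr, ← Finset.mul_sum]; ring_nf

lemma log_ineq {a c : ℝ} (ha : 0 ≤ a) (hac : a ≤ c) (hc : 0 < c) :
    a * Real.log (1 + c) ≤ c * Real.log (1 + a) := by
  have hcon := strictConcaveOn_log_Ioi.concaveOn
  have h := hcon.2 (Set.mem_Ioi.2 (by linarith : (0:ℝ) < 1 + c))
      (Set.mem_Ioi.2 one_pos)
      (show (0:ℝ) ≤ a / c by positivity)
      (show (0:ℝ) ≤ 1 - a / c by rw [sub_nonneg]; exact div_le_one_of_le₀ hac hc.le)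
      (by ring)
  simp only [smul_eq_mul, Real.log_one, mul_zero, add_zero, mul_one] at h
  have heq : a / c * (1 + c) + (1 - a / c) = 1 + a := by field_simp; ring
  rw [heq] at h
  calc a * Real.log (1 + c) = c * (a / c * Real.log (1 + c)) := by field_simp
  _ ≤ c * Real.log (1 + a) := mul_le_mul_of_nonneg_left h hc.le

lemma det_step {A : Matrix (Fin d) (Fin d) ℝ} (hA : A.PosDef) (c : ℝ) (v : Fin d → ℝ) :
    (A + c • vecMulVec v v).det = A.det * (1 + c * (v ⬝ᵥ (A⁻¹ *ᵥ v))) := by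
  have hu : c • vecMulVec v v = replicateCol Unit (c • v) * replicateRow Unit v := by
    rw [← vecMulVec_eq]
    ext i j
    simp [vecMulVec_apply]
    ring
  have hdet : IsUnit A.det := isUnit_iff_ne_zero.2 (ne_of_gt hA.det_pos)
  rw [hu, det_add_replicateCol_mul_replicateRow hdet]
  congr 1
  rw [det_unique]
  simp [Matrix.mul_apply, Matrix.mulVec, dotProduct, Finset.mul_sum, Finset.sum_mul]
  rw [Finset.sum_comm]
  congr 1
  ext i
  congr 1
  ext j
  ring

end AuxStmt15

set_option maxHeartbeats 2000000 in
/-- Worst-case bound on the sum of confidence widths for the Gram matrices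
`M 0 = I`, `M (t+1) = M t + σ⁻² ∑_{k < m t} x t k (x t k)ᵀ`:
`∑_{t<n} ∑_{k<m t} √(x t kᵀ (M t)⁻¹ x t k) ≤ K √(d n log(1 + nK/(dσ²)) / log(1 + 1/σ²))`. -/
theorem stmt_15 (σ : ℝ) (hσ : 0 < σ) (n K d : ℕ) (hn : 0 < n) (hK : 0 < K) (hd : 0 < d)
    (m : ℕ → ℕ) (hm : ∀ t < n, m t ≤ K)
    (x : ℕ → ℕ → Fin d → ℝ)
    (hx : ∀ t < n, ∀ k < m t, Real.sqrt (∑ j, x t k j ^ 2) ≤ 1)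
    (M : ℕ → Matrix (Fin d) (Fin d) ℝ)
    (hM0 : M 0 = 1)
    (hMt : ∀ t < n, M (t + 1) =
      M t + (σ ^ 2)⁻¹ • ∑ k ∈ Finset.range (m t), vecMulVec (x t k) (x t k)) :
    ∑ t ∈ Finset.range n, ∑ k ∈ Finset.range (m t),
        Real.sqrt (x t k ⬝ᵥ ((M t)⁻¹ *ᵥ x t k)) ≤
      (K : ℝ) * Real.sqrt ((d : ℝ) * n * Real.log (1 + n * K / (d * σ ^ 2)) /
        Real.log (1 + 1 / σ ^ 2)) := by
  classical
  set c : ℝ := (σ ^ 2)⁻¹ with hcdef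
  have hc : 0 < c := by positivity
  have hdR : (0:ℝ) < d := Nat.cast_pos.2 hd
  set q : ℕ → ℕ → ℝ := fun t k => x t k ⬝ᵥ ((M t)⁻¹ *ᵥ x t k) with hqdef
  -- invariant
  have inv : ∀ t, t ≤ n → (M t).PosDef ∧ (M t - 1).PosSemidef ∧
      (M t).trace ≤ d + t * (K * c) := by
    intro t
    induction t with
    | zero =>
      intro _
      rw [hM0]
      refine ⟨Matrix.PosDef.one, by simpa using Matrix.PosSemidef.zero, ?_⟩
      simp [Matrix.trace_one]
    | succ t ih =>
      intro h
      have ht : t < n := h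
      obtain ⟨hpd, hpsd, htr⟩ := ih (le_of_lt ht)
      have hrw := hMt t ht
      have hSpsd : (c • ∑ k ∈ Finset.range (m t), vecMulVec (x t k) (x t k)).PosSemidef :=
        AuxStmt15.psd_smul (AuxStmt15.psd_sum _ _) hc.le
      refine ⟨?_, ?_, ?_⟩
      · rw [hrw]; exact hpd.add_posSemidef hSpsd
      · rw [hrw]
        have : M t + c • ∑ k ∈ Finset.range (m t), vecMulVec (x t k) (x t k) - 1
            = (M t - 1) + c • ∑ k ∈ Finset.range (m t), vecMulVec (x t k) (x t k) := by
          abel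
        rw [this]
        exact hpsd.add hSpsd
      · rw [hrw, trace_add, trace_smul]
        have htrsum : (∑ k ∈ Finset.range (m t), vecMulVec (x t k) (x t k)).trace
            ≤ (m t : ℝ) := by
          rw [trace_sum]
          calc ∑ k ∈ Finset.range (m t), (vecMulVec (x t k) (x t k)).trace
              ≤ ∑ _k ∈ Finset.range (m t), (1:ℝ) := by
                refine Finset.sum_le_sum fun k hk => ?_
                have hk' := Finset.mem_range.1 hk
                have h1 := hx t ht k hk'
                have h2 : (∑ j, x t k j ^ 2) ≤ 1 := by
                  nlinarith [Real.sq_sqrt (show (0:ℝ) ≤ ∑ j, x t k j ^ 2 by positivity),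
                    Real.sqrt_nonneg (∑ j, x t k j ^ 2)]
                calc (vecMulVec (x t k) (x t k)).trace = ∑ j, x t k j ^ 2 := by
                      rw [vecMulVec_eq (ι := Unit), trace_replicateCol_mul_replicateRow]
                      simp [dotProduct, pow_two]
                _ ≤ 1 := h2
          _ = (m t : ℝ) := by simp
        have hmK : (m t : ℝ) ≤ K := Nat.cast_le.2 (hm t ht)
        have : c • (∑ k ∈ Finset.range (m t), vecMulVec (x t k) (x t k)).trace ≤ c * K := by
          rw [smul_eq_mul]
          exact mul_le_mul_of_nonneg_left (le_trans htrsum hmK) hc.le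
        push_cast
        push_cast at htr
        nlinarith [this, htr]
  -- q nonneg
  have hq0 : ∀ t, t < n → ∀ k, 0 ≤ q t k := by
    intro t ht k
    have h := ((inv t ht.le).1.inv.posSemidef).dotProduct_mulVec_nonneg (x t k)
    simpa using h
  -- q ≤ 1
  have hq1 : ∀ t, t < n → ∀ k, k < m t → q t k ≤ 1 := by
    intro t ht k hk
    have hpd := (inv t ht.le).1
    have hdet : IsUnit (M t).det := isUnit_iff_ne_zero.2 (ne_of_gt hpd.det_pos)
    set y := (M t)⁻¹ *ᵥ x t k with hy
    have hMy : M t *ᵥ y = x t k := by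
      rw [hy, mulVec_mulVec, mul_nonsing_inv _ hdet, one_mulVec]
    have hyMy : y ⬝ᵥ y ≤ y ⬝ᵥ (M t *ᵥ y) := by
      have h := (inv t ht.le).2.1.dotProduct_mulVec_nonneg y
      rw [Matrix.sub_mulVec] at h
      simp only [dotProduct_sub, Matrix.one_mulVec, star_trivial] at h
      linarith
    have hxx : (∑ j, x t k j ^ 2) ≤ 1 := by
      have h1 := hx t ht k hk
      nlinarith [Real.sq_sqrt (show (0:ℝ) ≤ ∑ j, x t k j ^ 2 by positivity),
        Real.sqrt_nonneg (∑ j, x t k j ^ 2)]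
    have hCS := Finset.sum_mul_sq_le_sq_mul_sq Finset.univ (x t k) y
    have hqx : q t k = x t k ⬝ᵥ y := rfl
    have h2 : y ⬝ᵥ (M t *ᵥ y) = q t k := by rw [hMy, hqx]; exact dotProduct_comm _ _
    have hyy : (0:ℝ) ≤ y ⬝ᵥ y := Finset.sum_nonneg fun i _ => mul_self_nonneg _
    have hsum1 : x t k ⬝ᵥ y = ∑ i, x t k i * y i := rfl
    have hsum2 : y ⬝ᵥ y = ∑ i, y i ^ 2 := by
      simp [dotProduct, pow_two]
    have hq2 : q t k ^ 2 ≤ (∑ i, x t k i ^ 2) * (y ⬝ᵥ y) := by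
      rw [hqx, hsum1, hsum2]; exact hCS
    have hqnn := hq0 t ht k
    nlinarith [hq2, hxx, hyy, hyMy, h2, hqnn]
  -- supremum over the batch
  set Q : ℕ → ℝ := fun t => if h : (Finset.range (m t)).Nonempty then
      ((Finset.range (m t)).image (q t)).max' (h.image _) else 0 with hQdef
  have hQub : ∀ t, ∀ k, k < m t → q t k ≤ Q t := by
    intro t k hk
    have hne : (Finset.range (m t)).Nonempty := ⟨k, Finset.mem_range.2 hk⟩
    simp only [hQdef, dif_pos hne]
    exact Finset.le_max' _ _ (Finset.mem_image_of_mem _ (Finset.mem_range.2 hk))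
  have hQcases : ∀ t, Q t = 0 ∨ ∃ k, k < m t ∧ Q t = q t k := by
    intro t
    by_cases hne : (Finset.range (m t)).Nonempty
    · right
      have hmem := Finset.max'_mem ((Finset.range (m t)).image (q t)) (hne.image _)
      rw [Finset.mem_image] at hmem
      obtain ⟨k, hk, hkq⟩ := hmem
      exact ⟨k, Finset.mem_range.1 hk, by simp only [hQdef, dif_pos hne]; exact hkq.symm⟩
    · left; simp only [hQdef, dif_neg hne]
  have hQ0 : ∀ t, t < n → 0 ≤ Q t := by
    intro t ht
    rcases hQcases t with h | ⟨k, hk, hQk⟩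
    · rw [h]
    · rw [hQk]; exact hq0 t ht k
  have hQ1 : ∀ t, t < n → Q t ≤ 1 := by
    intro t ht
    rcases hQcases t with h | ⟨k, hk, hQk⟩
    · rw [h]; norm_num
    · rw [hQk]; exact hq1 t ht k hk
  -- determinant step
  have hdetstep : ∀ t, t < n → (M t).det * (1 + c * Q t) ≤ (M (t + 1)).det := by
    intro t ht
    have hpd := (inv t ht.le).1
    rw [hMt t ht]
    by_cases hne : (Finset.range (m t)).Nonempty
    · have hex := hQcases t
      rcases hex with h0 | ⟨k₀, hk₀, hQeq⟩
      · -- Q t = 0 still fine via det_mono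
        rw [h0, mul_zero, add_zero, mul_one]
        exact AuxStmt15.det_mono hpd (AuxStmt15.psd_smul (AuxStmt15.psd_sum _ _) hc.le)
      · have hsplit : ∑ k ∈ Finset.range (m t), vecMulVec (x t k) (x t k)
            = vecMulVec (x t k₀) (x t k₀)
              + ∑ k ∈ (Finset.range (m t)).erase k₀, vecMulVec (x t k) (x t k) :=
          (Finset.add_sum_erase _ _ (Finset.mem_range.2 hk₀)).symm
        rw [hsplit, smul_add, ← add_assoc]
        have step1 : (M t + c • vecMulVec (x t k₀) (x t k₀)).det
            = (M t).det * (1 + c * q t k₀) := AuxStmt15.det_step hpd c _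
        have hpd2 : (M t + c • vecMulVec (x t k₀) (x t k₀)).PosDef :=
          hpd.add_posSemidef (AuxStmt15.psd_smul (AuxStmt15.psd_vecMulVec _) hc.le)
        have hpsd2 : (c • ∑ k ∈ (Finset.range (m t)).erase k₀,
            vecMulVec (x t k) (x t k)).PosSemidef :=
          AuxStmt15.psd_smul
            (Finset.sum_induction _ _ (fun _ _ ha hb => ha.add hb) Matrix.PosSemidef.zero
              (fun k _ => AuxStmt15.psd_vecMulVec _)) hc.le
        calc (M t).det * (1 + c * Q t)
            = (M t + c • vecMulVec (x t k₀) (x t k₀)).det := by rw [step1, hQeq]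
        _ ≤ _ := AuxStmt15.det_mono hpd2 hpsd2
    · rw [Finset.not_nonempty_iff_eq_empty] at hne
      have hQt : Q t = 0 := by simp only [hQdef, hne]; simp
      rw [hQt, mul_zero, add_zero, mul_one, hne]
      simp
  -- telescoping
  have hlogdet : ∑ t ∈ Finset.range n, Real.log (1 + c * Q t) ≤ Real.log ((M n).det) := by
    have h0 : Real.log ((M 0).det) = 0 := by rw [hM0]; simp
    calc ∑ t ∈ Finset.range n, Real.log (1 + c * Q t)
        ≤ ∑ t ∈ Finset.range n, (Real.log ((M (t+1)).det) - Real.log ((M t).det)) := by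
          refine Finset.sum_le_sum fun t ht' => ?_
          have ht := Finset.mem_range.1 ht'
          have hpd := (inv t ht.le).1
          have h1 : (0:ℝ) < 1 + c * Q t := by nlinarith [hQ0 t ht, hc]
          have hds := hdetstep t ht
          have hlog := Real.log_le_log (mul_pos hpd.det_pos h1) hds
          rw [Real.log_mul (ne_of_gt hpd.det_pos) (ne_of_gt h1)] at hlog
          linarith
    _ = Real.log ((M n).det) - Real.log ((M 0).det) := Finset.sum_range_sub (fun t => Real.log ((M t).det)) n
    _ = Real.log ((M n).det) := by rw [h0, sub_zero]
  -- bound on log det M n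
  have hfin : Real.log ((M n).det) ≤ d * Real.log (1 + n * K * c / d) := by
    obtain ⟨hpdn, _, htrn⟩ := inv n le_rfl
    have h1 : (M n).det ≤ ((M n).trace / d) ^ d :=
      AuxStmt15.det_le_pow_trace hpdn.posSemidef hd
    have htrpos : (0:ℝ) < (M n).trace := by
      rw [AuxStmt15.trace_eq_sum_eigenvalues hpdn.isHermitian]
      refine Finset.sum_pos (fun i _ => hpdn.eigenvalues_pos i) ?_
      exact Finset.univ_nonempty_iff.2 ⟨⟨0, hd⟩⟩
    have h2 : (M n).trace / d ≤ 1 + n * K * c / d := by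
      rw [div_le_iff₀ hdR]
      have : ((1:ℝ) + n * K * c / d) * d = d + n * K * c := by field_simp
      rw [this]
      push_cast at htrn ⊢
      nlinarith [htrn]
    calc Real.log ((M n).det) ≤ Real.log (((M n).trace / d) ^ d) :=
          Real.log_le_log hpdn.det_pos h1
    _ = d * Real.log ((M n).trace / d) := by rw [Real.log_pow]
    _ ≤ d * Real.log (1 + n * K * c / d) := by
        refine mul_le_mul_of_nonneg_left ?_ hdR.le
        exact Real.log_le_log (by positivity) h2
  -- sum of Q bound
  set L : ℝ := Real.log (1 + c) with hLdef
  have hL : 0 < L := Real.log_pos (by linarith)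
  have hsumQ : (∑ t ∈ Finset.range n, Q t) * L ≤ d * Real.log (1 + n * K * c / d) := by
    calc (∑ t ∈ Finset.range n, Q t) * L = ∑ t ∈ Finset.range n, Q t * L := by rw [Finset.sum_mul]
    _ ≤ ∑ t ∈ Finset.range n, Real.log (1 + c * Q t) := by
        refine Finset.sum_le_sum fun t ht' => ?_
        have ht := Finset.mem_range.1 ht'
        have h := AuxStmt15.log_ineq (mul_nonneg hc.le (hQ0 t ht))
          (by nlinarith [hQ1 t ht, hc] : c * Q t ≤ c) hc
        have h2 : c * (Q t * L) ≤ c * Real.log (1 + c * Q t) := by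
          rw [hLdef] at *
          nlinarith [h]
        exact le_of_mul_le_mul_left h2 hc
    _ ≤ Real.log ((M n).det) := hlogdet
    _ ≤ d * Real.log (1 + n * K * c / d) := hfin
  have hsumQ0 : 0 ≤ ∑ t ∈ Finset.range n, Q t :=
    Finset.sum_nonneg fun t ht => hQ0 t (Finset.mem_range.1 ht)
  have hsumQbd : ∑ t ∈ Finset.range n, Q t ≤ d * Real.log (1 + n * K * c / d) / L := by
    rw [le_div_iff₀ hL]
    exact hsumQ
  -- final assembly
  have hrw1 : Real.log (1 + 1 / σ ^ 2) = L := by rw [hLdef, hcdef, one_div]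
  have hrw2 : (1:ℝ) + n * K / (d * σ ^ 2) = 1 + n * K * c / d := by
    rw [hcdef]; field_simp
  have step1 : ∑ t ∈ Finset.range n, ∑ k ∈ Finset.range (m t), Real.sqrt (q t k)
      ≤ (K:ℝ) * ∑ t ∈ Finset.range n, Real.sqrt (Q t) := by
    rw [Finset.mul_sum]
    refine Finset.sum_le_sum fun t ht' => ?_
    have ht := Finset.mem_range.1 ht'
    calc ∑ k ∈ Finset.range (m t), Real.sqrt (q t k)
        ≤ ∑ _k ∈ Finset.range (m t), Real.sqrt (Q t) := by
          refine Finset.sum_le_sum fun k hk => ?_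
          exact Real.sqrt_le_sqrt (hQub t k (Finset.mem_range.1 hk))
    _ = (m t : ℝ) * Real.sqrt (Q t) := by
          rw [Finset.sum_const, Finset.card_range, nsmul_eq_mul]
    _ ≤ (K : ℝ) * Real.sqrt (Q t) := by
          exact mul_le_mul_of_nonneg_right (Nat.cast_le.2 (hm t ht)) (Real.sqrt_nonneg _)
  have step2 : ∑ t ∈ Finset.range n, Real.sqrt (Q t)
      ≤ Real.sqrt ((n : ℝ) * ∑ t ∈ Finset.range n, Q t) := by
    rw [Real.le_sqrt (Finset.sum_nonneg fun t _ => Real.sqrt_nonneg _)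
      (by positivity)]
    calc (∑ t ∈ Finset.range n, Real.sqrt (Q t)) ^ 2
        ≤ (Finset.range n).card * ∑ t ∈ Finset.range n, Real.sqrt (Q t) ^ 2 :=
          sq_sum_le_card_mul_sum_sq
    _ = (n : ℝ) * ∑ t ∈ Finset.range n, Q t := by
          rw [Finset.card_range]
          congr 1
          refine Finset.sum_congr rfl fun t ht' => ?_
          exact Real.sq_sqrt (hQ0 t (Finset.mem_range.1 ht'))
  have step3 : Real.sqrt ((n : ℝ) * ∑ t ∈ Finset.range n, Q t)
      ≤ Real.sqrt ((d : ℝ) * n * Real.log (1 + n * K / (d * σ ^ 2)) /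
        Real.log (1 + 1 / σ ^ 2)) := by
    apply Real.sqrt_le_sqrt
    rw [hrw1, hrw2]
    have : (d : ℝ) * n * Real.log (1 + n * K * c / d) / L
        = (n : ℝ) * (d * Real.log (1 + n * K * c / d) / L) := by ring
    rw [this]
    exact mul_le_mul_of_nonneg_left hsumQbd (Nat.cast_nonneg n)
  calc ∑ t ∈ Finset.range n, ∑ k ∈ Finset.range (m t),
        Real.sqrt (x t k ⬝ᵥ ((M t)⁻¹ *ᵥ x t k))
      = ∑ t ∈ Finset.range n, ∑ k ∈ Finset.range (m t), Real.sqrt (q t k) := rfl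
  _ ≤ (K:ℝ) * ∑ t ∈ Finset.range n, Real.sqrt (Q t) := step1
  _ ≤ (K:ℝ) * Real.sqrt ((n : ℝ) * ∑ t ∈ Finset.range n, Q t) :=
      mul_le_mul_of_nonneg_left step2 (Nat.cast_nonneg K)
  _ ≤ _ := mul_le_mul_of_nonneg_left step3 (Nat.cast_nonneg K)
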